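/- As formal power series over ℚ, U₀(q) = U₋(q) − (1/2)·{q}_∞, where U₀(q) = (1/2) ∑_{m=0}^{∞} (−1)^{z(m)} q^m. -/

import Mathlib

/-- The Mahler factorial `{q}_n = ∏_{j=0}^{n-1} (1 - q^{2^j})` as a power series over `ℚ`. -/
noncomputable def mahlerFacPS (n : ℕ) : PowerSeries ℚ :=
  ∏ j ∈ Finset.range n, (1 - PowerSeries.X ^ 2 ^ j)

/-- `{q}_∞ = ∏_{j=0}^∞ (1 - q^{2^j})` as a formal power series over `ℚ`: the infinite
product converges coefficientwise, its `n`-th coefficient being that of any partial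
product `{q}_N` with `2^N > n`, e.g. `N = n + 1`. -/
noncomputable def mahlerFacInf : PowerSeries ℚ :=
  PowerSeries.mk fun n => PowerSeries.coeff n (mahlerFacPS (n + 1))

/-- `U₋(q) = 1 - ∑_{i=0}^∞ q^{2^{2i+1}} {q}_{2i+1}` as a formal power series over `ℚ`;
each coefficient receives contributions from only finitely many summands. -/
noncomputable def Uminus : PowerSeries ℚ :=
  1 - PowerSeries.mk fun n =>
    ∑ i ∈ Finset.range (n + 1),
      PowerSeries.coeff n (PowerSeries.X ^ 2 ^ (2 * i + 1) * mahlerFacPS (2 * i + 1))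

/-- `z m` is the number of zero digits among the (nonleading) binary digits of `m`,
with `z 0 = 0`. -/
def zeroDigits (m : ℕ) : ℕ := (Nat.digits 2 m).count 0

/-- `U₀(q) = (1/2) ∑_{m=0}^∞ (-1)^{z(m)} q^m` as a formal power series over `ℚ`. -/
noncomputable def U0PS : PowerSeries ℚ :=
  PowerSeries.mk fun m => (1 / 2 : ℚ) * (-1) ^ zeroDigits m



def onesCount (m : ℕ) : ℕ := (Nat.digits 2 m).count 1

lemma onesCount_rec (k : ℕ) : onesCount k = k % 2 + onesCount (k / 2) := by
  rcases Nat.eq_zero_or_pos k with h | h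
  · subst h; simp [onesCount]
  · unfold onesCount
    rw [Nat.digits_def' (by norm_num : 1 < 2) h, List.count_cons]
    rcases Nat.mod_two_eq_zero_or_one k with h2 | h2 <;> simp [h2] <;> omega

lemma onesCount_add_pow : ∀ n k, k < 2 ^ n → onesCount (k + 2 ^ n) = onesCount k + 1 := by
  intro n
  induction n with
  | zero =>
    intro k hk
    interval_cases k
    have h1 : Nat.digits 2 1 = [1] := by
      rw [Nat.digits_def' (by norm_num : 1 < 2) one_pos]; simp
    simp [onesCount, h1]
  | succ n ih =>
    intro k hk
    have hp : (2:ℕ) ^ (n+1) = 2 ^ n * 2 := pow_succ 2 n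
    rw [onesCount_rec (k + 2 ^ (n+1)), onesCount_rec k]
    have e1 : (k + 2 ^ (n+1)) % 2 = k % 2 := by omega
    have e2 : (k + 2 ^ (n+1)) / 2 = k / 2 + 2 ^ n := by omega
    rw [e1, e2, ih _ (by omega)]
    omega

lemma count_len : ∀ l : List ℕ, (∀ x ∈ l, x < 2) → l.count 0 + l.count 1 = l.length := by
  intro l
  induction l with
  | nil => simp
  | cons a t ih =>
    intro h
    have ha : a < 2 := h a (by simp)
    have ht := ih (fun x hx => h x (by simp [hx]))
    simp only [List.count_cons, List.length_cons]
    interval_cases a <;> simp <;> omega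



open PowerSeries in
lemma mahler_eq (n : ℕ) :
    mahlerFacPS n = ∑ k ∈ Finset.range (2 ^ n), C ((-1 : ℚ) ^ onesCount k) * X ^ k := by
  induction n with
  | zero => simp [mahlerFacPS, onesCount]
  | succ n ih =>
    rw [mahlerFacPS, Finset.prod_range_succ, ← mahlerFacPS, ih]
    have hsplit : (2:ℕ) ^ (n+1) = 2 ^ n + 2 ^ n := by ring
    rw [hsplit, Finset.sum_range_add]
    have h2 : ∀ k ∈ Finset.range (2 ^ n),
        C ((-1:ℚ) ^ onesCount (2 ^ n + k)) * X ^ (2 ^ n + k)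
          = -(C ((-1:ℚ) ^ onesCount k) * X ^ k * X ^ (2 ^ n)) := by
      intro k hk
      rw [Finset.mem_range] at hk
      rw [add_comm (2^n) k, onesCount_add_pow n k hk, pow_succ, pow_add]
      rw [map_mul, map_pow, map_neg, map_one]
      ring
    rw [Finset.sum_congr rfl h2, Finset.sum_neg_distrib, ← Finset.sum_mul]
    ring

open PowerSeries in
lemma coeff_mahler (n k : ℕ) :
    coeff k (mahlerFacPS n) = if k < 2 ^ n then (-1 : ℚ) ^ onesCount k else 0 := by
  rw [mahler_eq, map_sum]
  simp only [coeff_C_mul, coeff_X_pow, mul_ite, mul_one, mul_zero]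
  rw [Finset.sum_ite_eq (Finset.range (2 ^ n)) k (fun j => (-1 : ℚ) ^ onesCount j)]
  simp [Finset.mem_range]

lemma negpow_eq {a b : ℕ} (h : (a + b) % 2 = 0) : (-1 : ℚ) ^ a = (-1) ^ b := by
  rcases Nat.even_or_odd a with ha | ha
  · have hb : Even b := Nat.even_iff.2 (by have := Nat.even_iff.1 ha; omega)
    rw [ha.neg_one_pow, hb.neg_one_pow]
  · have hb : Odd b := Nat.odd_iff.2 (by have := Nat.odd_iff.1 ha; omega)
    rw [ha.neg_one_pow, hb.neg_one_pow]

lemma negpow_neg {a b : ℕ} (h : (a + b) % 2 = 1) : (-1 : ℚ) ^ a = -(-1) ^ b := by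
  rcases Nat.even_or_odd a with ha | ha
  · have hb : Odd b := Nat.odd_iff.2 (by have := Nat.even_iff.1 ha; omega)
    rw [ha.neg_one_pow, hb.neg_one_pow, neg_neg]
  · have hb : Even b := Nat.even_iff.2 (by have := Nat.odd_iff.1 ha; omega)
    rw [ha.neg_one_pow, hb.neg_one_pow]


theorem stmt11 : U0PS = Uminus - (1 / 2 : ℚ) • mahlerFacInf := by
  ext m
  have hzs : zeroDigits m + onesCount m = (Nat.digits 2 m).length :=
    count_len _ (fun x hx => Nat.digits_lt_base (by norm_num) hx)
  have hinf : PowerSeries.coeff m (mahlerFacPS (m + 1)) = (-1 : ℚ) ^ onesCount m := by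
    rw [coeff_mahler]
    exact if_pos (lt_of_lt_of_le (Nat.lt_two_pow_self (n := m))
      (Nat.pow_le_pow_right (by norm_num) (Nat.le_succ m)))
  have hterm : ∀ i : ℕ,
      PowerSeries.coeff m (PowerSeries.X ^ 2 ^ (2 * i + 1) * mahlerFacPS (2 * i + 1)) =
        if 2 ^ (2 * i + 1) ≤ m ∧ m < 2 ^ (2 * i + 2) then (-1 : ℚ) ^ onesCount m * (-1)
        else 0 := by
    intro i
    rw [PowerSeries.coeff_X_pow_mul', ]
    have hpow : (2 : ℕ) ^ (2 * i + 2) = 2 ^ (2 * i + 1) + 2 ^ (2 * i + 1) := by ring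
    by_cases h1 : 2 ^ (2 * i + 1) ≤ m
    · rw [if_pos h1, coeff_mahler]
      by_cases h2 : m - 2 ^ (2 * i + 1) < 2 ^ (2 * i + 1)
      · rw [if_pos h2, if_pos ⟨h1, by omega⟩]
        have h3 := onesCount_add_pow (2 * i + 1) (m - 2 ^ (2 * i + 1)) h2
        rw [Nat.sub_add_cancel h1] at h3
        rw [h3, pow_succ]
        ring
      · rw [if_neg h2, if_neg (by omega)]
    · rw [if_neg h1, if_neg (by tauto)]
  rw [U0PS, Uminus, mahlerFacInf]
  simp only [map_sub, PowerSeries.coeff_one, PowerSeries.coeff_mk, PowerSeries.coeff_smul,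
    smul_eq_mul, hinf, hterm]
  rcases Nat.eq_zero_or_pos m with hm | hm
  · subst hm
    rw [Finset.sum_eq_zero (fun i _ => if_neg (by
      rintro ⟨h, -⟩
      have : 0 < (2:ℕ) ^ (2 * i + 1) := pow_pos (by norm_num) _
      omega))]
    norm_num [zeroDigits, onesCount]
  · set L := Nat.log 2 m with hLdef
    have hL1 : 2 ^ L ≤ m := Nat.pow_log_le_self 2 (by omega)
    have hL2 : m < 2 ^ (L + 1) := Nat.lt_pow_succ_log_self (by norm_num) m
    have hlen : (Nat.digits 2 m).length = L + 1 := Nat.digits_len 2 m (by norm_num) (by omega)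
    have hif : ∀ i : ℕ, (2 ^ (2 * i + 1) ≤ m ∧ m < 2 ^ (2 * i + 2)) ↔ 2 * i + 1 = L := by
      intro i
      constructor
      · rintro ⟨h1, h2⟩
        exact (Nat.log_eq_of_pow_le_of_lt_pow h1 h2).symm
      · intro h
        rw [← h] at hL1 hL2
        exact ⟨hL1, hL2⟩
    rcases Nat.even_or_odd L with hLe | hLo
    · rw [Finset.sum_eq_zero (fun i _ => if_neg (fun hc => by
        have h1 := (hif i).1 hc
        have h2 := Nat.even_iff.1 hLe
        omega))]
      rw [if_neg (by omega : ¬ m = 0),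
        negpow_neg (by have := Nat.even_iff.1 hLe; omega : (zeroDigits m + onesCount m) % 2 = 1)]
      ring
    · obtain ⟨i0, hi0⟩ := hLo
      have hmem : i0 ∈ Finset.range (m + 1) :=
        Finset.mem_range.2 (by have := Nat.log_le_self 2 m; omega)
      rw [Finset.sum_eq_single_of_mem i0 hmem
        (fun b _ hb => if_neg (fun hc => hb (by have := (hif b).1 hc; omega)))]
      rw [if_pos ((hif i0).2 (by omega)), if_neg (by omega : ¬ m = 0),
        negpow_eq (by omega : (zeroDigits m + onesCount m) % 2 = 0)]
      ring
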